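/- Let n be odd and let g₀, g₁, g₂, g₃ : 𝔽₂ⁿ → 𝔽₂ be semi-bent functions with g₀ ⊕ g₁ ⊕ g₂ ⊕ g₃ = 0. Then g₀g₁ ⊕ g₀g₂ ⊕ g₁g₂ is semi-bent if and only if for all u ∈ 𝔽₂ⁿ: the number of i ∈ {0,1,2,3} with W_{g_i}(u) = 0 is even, and whenever W_{g_i}(u) ≠ 0 for all i ∈ {0,1,2,3}, either W_{g₀}(u)·W_{g₁}(u) = W_{g₂}(u)·W_{g₃}(u), or the number of i ∈ {0,1,2,3} with W_{g_i}(u) = 2^{(n+1)/2} is odd (i.e., 1 or 3) but not W_{g₀}(u) = W_{g₁}(u) = W_{g₂}(u). -/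

import Mathlib

open Finset

/-- Boolean functions on `𝔽₂ⁿ`. -/
abbrev BF (n : ℕ) := (Fin n → ZMod 2) → ZMod 2

/-- Dot product on `𝔽₂ⁿ`. -/
def bdot {n : ℕ} (u x : Fin n → ZMod 2) : ZMod 2 := ∑ i, u i * x i

/-- Walsh–Hadamard transform of a Boolean function. -/
def walsh {n : ℕ} (g : BF n) (u : Fin n → ZMod 2) : ℤ :=
  ∑ x : Fin n → ZMod 2, (-1 : ℤ) ^ (g x + bdot u x).val

/-- Generalized Walsh–Hadamard transform of `f : 𝔽₂ⁿ → ℤ_q`. -/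
noncomputable def gwht {n q : ℕ} (f : (Fin n → ZMod 2) → ZMod q) (u : Fin n → ZMod 2) : ℂ :=
  ∑ x : Fin n → ZMod 2,
    Complex.exp (2 * Real.pi * Complex.I / (q : ℂ)) ^ (f x).val * (-1 : ℂ) ^ (bdot u x).val

/-- `f : 𝔽₂ⁿ → ℤ_q` is gbent if `|H_f(u)| = 2^{n/2}` for all `u`. -/
def IsGbent {n q : ℕ} (f : (Fin n → ZMod 2) → ZMod q) : Prop :=
  ∀ u, ‖gwht f u‖ = (2 : ℝ) ^ ((n : ℝ) / 2)

/-- A Boolean function (in an even number `n` of variables) is bent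
if `|W_g(u)| = 2^{n/2}` for all `u`. -/
def IsBent {n : ℕ} (g : BF n) : Prop := ∀ u, |walsh g u| = 2 ^ (n / 2)

/-- A Boolean function (in an odd number `n` of variables) is semi-bent if
`W_g(u) ∈ {0, ±2^{(n+1)/2}}` for all `u`. -/
def IsSemiBent {n : ℕ} (g : BF n) : Prop :=
  ∀ u, walsh g u = 0 ∨ walsh g u = 2 ^ ((n + 1) / 2) ∨ walsh g u = -2 ^ ((n + 1) / 2)

/-- `gd` is the dual of the bent function `g`: `W_g(u) = 2^{n/2}(-1)^{gd(u)}`. -/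
def IsDual {n : ℕ} (g gd : BF n) : Prop :=
  ∀ u, walsh g u = 2 ^ (n / 2) * (-1 : ℤ) ^ (gd u).val

/-- The `t`-th binary digit of `j`, as an element of `𝔽₂`. -/
def bit (t j : ℕ) : ZMod 2 := if Nat.testBit j t then 1 else 0

/-- Dot product `z_r · z_j` of the binary representations (of length `m`) of `r` and `j`. -/
def zdot (m r j : ℕ) : ZMod 2 := ∑ t ∈ Finset.range m, bit t r * bit t j

/-- Entry `(r, j)` of the Sylvester–Hadamard matrix `H_{2^m}`, i.e. `(-1)^{z_r · z_j}`. -/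
def hadRow (m r j : ℕ) : ℤ := (-1 : ℤ) ^ (zdot m r j).val

/-- `a 0, …, a (k-1)` are the Boolean coordinate functions of `f : 𝔽₂ⁿ → ℤ_{2^k}`:
`f = a₀ + 2a₁ + ⋯ + 2^{k-1}a_{k-1}`. -/
def coordExpand {n : ℕ} (k : ℕ) (a : ℕ → BF n) (f : (Fin n → ZMod 2) → ZMod (2 ^ k)) : Prop :=
  ∀ x, f x = ∑ j ∈ Finset.range k, (2 : ZMod (2 ^ k)) ^ j * ((a j x).val : ZMod (2 ^ k))

/-- The `i`-th component function `g_i = a_{k-1} ⊕ i₀a₀ ⊕ ⋯ ⊕ i_{k-2}a_{k-2}`. -/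
def component {n : ℕ} (k : ℕ) (a : ℕ → BF n) (i : ℕ) : BF n :=
  fun x => a (k - 1) x + ∑ t ∈ Finset.range (k - 1), bit t i * a t x

/-- The affine space `a0 ⊕ ⟨a 0, …, a (m-1)⟩` of Boolean functions. -/
def affSpan {n : ℕ} (m : ℕ) (a0 : BF n) (a : ℕ → BF n) : Set (BF n) :=
  {g | ∃ c : ℕ → ZMod 2, g = fun x => a0 x + ∑ t ∈ Finset.range m, c t * a t x}

/-- Walsh–Hadamard transform for Boolean functions on `𝔽₂ⁿ × 𝔽₂^m`. -/
def walshP {n m : ℕ} (F : (Fin n → ZMod 2) → (Fin m → ZMod 2) → ZMod 2)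
    (u : Fin n → ZMod 2) (v : Fin m → ZMod 2) : ℤ :=
  ∑ x : Fin n → ZMod 2, ∑ y : Fin m → ZMod 2, (-1 : ℤ) ^ (F x y + bdot u x + bdot v y).val

lemma pointwise4 (a b c d e : ZMod 2) (h : d = a + b + c) :
    2 * (-1 : ℤ) ^ ((a * b + a * c + b * c + e).val) =
      (-1) ^ ((a + e).val) + (-1) ^ ((b + e).val) + (-1) ^ ((c + e).val)
        - (-1) ^ ((d + e).val) := by
  subst h; revert a b c e; decide

lemma walsh_maj {n : ℕ} (g₀ g₁ g₂ g₃ : BF n)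
    (hsum : ∀ x, g₀ x + g₁ x + g₂ x + g₃ x = 0) (u : Fin n → ZMod 2) :
    2 * walsh (fun x => g₀ x * g₁ x + g₀ x * g₂ x + g₁ x * g₂ x) u
      = walsh g₀ u + walsh g₁ u + walsh g₂ u - walsh g₃ u := by
  have hg₃ : ∀ x, g₃ x = g₀ x + g₁ x + g₂ x := by
    intro x
    have h4 : ∀ a b c d : ZMod 2, a + b + c + d = 0 → d = a + b + c := by decide
    exact h4 _ _ _ _ (hsum x)
  simp only [walsh, Finset.mul_sum, ← Finset.sum_add_distrib, ← Finset.sum_sub_distrib]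
  exact Finset.sum_congr rfl fun x _ => pointwise4 _ _ _ _ _ (hg₃ x)

lemma card4 (p : Fin 4 → Prop) [DecidablePred p] :
    (Finset.univ.filter p).card =
      (if p 0 then 1 else 0) + (if p 1 then 1 else 0) + (if p 2 then 1 else 0)
        + (if p 3 then 1 else 0) := by
  rw [Finset.card_filter, Fin.sum_univ_four]

set_option maxHeartbeats 2000000 in
lemma main_aux (c W₀ W₁ W₂ W₃ W : ℤ) (hc : 2 ≤ c)
    (h0 : W₀ = 0 ∨ W₀ = c ∨ W₀ = -c) (h1 : W₁ = 0 ∨ W₁ = c ∨ W₁ = -c)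
    (h2 : W₂ = 0 ∨ W₂ = c ∨ W₂ = -c) (h3 : W₃ = 0 ∨ W₃ = c ∨ W₃ = -c)
    (hW : 2 * W = W₀ + W₁ + W₂ - W₃) :
    (W = 0 ∨ W = c ∨ W = -c) ↔
      (Even ((Finset.univ.filter fun i : Fin 4 => ![W₀, W₁, W₂, W₃] i = 0).card) ∧
        ((∀ i : Fin 4, ![W₀, W₁, W₂, W₃] i ≠ 0) →
          (W₀ * W₁ = W₂ * W₃ ∨
            (((Finset.univ.filter fun i : Fin 4 => ![W₀, W₁, W₂, W₃] i = c).card = 1 ∨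
              (Finset.univ.filter fun i : Fin 4 => ![W₀, W₁, W₂, W₃] i = c).card = 3) ∧
              ¬(W₀ = W₁ ∧ W₁ = W₂))))) := by
  have hc0 : c ≠ 0 := by omega
  have hc0' : (0:ℤ) ≠ c := by omega
  have hcn : -c ≠ (0:ℤ) := by omega
  have hcnc : -c ≠ c := by omega
  have hccn : c ≠ -c := by omega
  have hcc : (0:ℤ) < c * c := by positivity
  have hp : c * c ≠ -(c * c) := by omega
  have hp' : -(c * c) ≠ c * c := by omega
  rcases h0 with rfl | rfl | rfl <;> rcases h1 with rfl | rfl | rfl <;>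
    rcases h2 with rfl | rfl | rfl <;> rcases h3 with rfl | rfl | rfl <;>
    simp [card4, Fin.forall_fin_succ, Matrix.cons_val_zero, Matrix.cons_val_one,
      Matrix.head_cons, Matrix.cons_val_succ, hc0, hc0', hcn, hcnc, hccn,
      hp, hp', hcc.ne', Nat.even_iff,
      neg_mul, mul_neg, neg_neg] <;> omega

/-- Proposition 4: the semi-bent analogue of the secondary construction. -/
theorem semibent_quadruple_secondary_construction (n : ℕ) (hn : Odd n) (g₀ g₁ g₂ g₃ : BF n)
    (hs₀ : IsSemiBent g₀) (hs₁ : IsSemiBent g₁) (hs₂ : IsSemiBent g₂) (hs₃ : IsSemiBent g₃)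
    (hsum : ∀ x, g₀ x + g₁ x + g₂ x + g₃ x = 0) :
    IsSemiBent (fun x => g₀ x * g₁ x + g₀ x * g₂ x + g₁ x * g₂ x) ↔
      ∀ u,
        Even ((Finset.univ.filter fun i : Fin 4 =>
          ![walsh g₀ u, walsh g₁ u, walsh g₂ u, walsh g₃ u] i = 0).card) ∧
        ((∀ i : Fin 4, ![walsh g₀ u, walsh g₁ u, walsh g₂ u, walsh g₃ u] i ≠ 0) →
          (walsh g₀ u * walsh g₁ u = walsh g₂ u * walsh g₃ u ∨
            (((Finset.univ.filter fun i : Fin 4 =>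
                  ![walsh g₀ u, walsh g₁ u, walsh g₂ u, walsh g₃ u] i =
                    2 ^ ((n + 1) / 2)).card = 1 ∨
              (Finset.univ.filter fun i : Fin 4 =>
                  ![walsh g₀ u, walsh g₁ u, walsh g₂ u, walsh g₃ u] i =
                    2 ^ ((n + 1) / 2)).card = 3) ∧
              ¬(walsh g₀ u = walsh g₁ u ∧ walsh g₁ u = walsh g₂ u)))) := by
  have hc : 2 ≤ (2:ℤ) ^ ((n + 1) / 2) := by
    obtain ⟨k, rfl⟩ := hn
    calc (2:ℤ) = 2 ^ 1 := by norm_num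
      _ ≤ 2 ^ ((2 * k + 1 + 1) / 2) := by
          apply pow_le_pow_right₀ (by norm_num)
          omega
  exact forall_congr' fun u =>
    main_aux _ _ _ _ _ _ hc (hs₀ u) (hs₁ u) (hs₂ u) (hs₃ u) (walsh_maj g₀ g₁ g₂ g₃ hsum u)
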